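/- Let Q and H be symmetric d×d matrices with Q ⪰ H. Define the greedy SR1 iteration: Q₀ = Q, and Q_{k+1} = SR1(Q_k, H, u_k) where u_k is a standard basis vector maximizing u_kᵀ(Q_k − H)u_k (and Q_{k+1} = Q_k if Q_k = H). Then there exists 0 ≤ k ≤ d with Q_k = H. -/

import Mathlib

open Matrix

section Aux

variable {d : ℕ}

private lemma symm_dot {A : Matrix (Fin d) (Fin d) ℝ} (hA : A.IsHermitian) (u x : Fin d → ℝ) :
    u ⬝ᵥ A.mulVec x = (A.mulVec u) ⬝ᵥ x := by
  have hs : ∀ i j, A j i = A i j := fun i j => by simpa using hA.apply i j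
  simp only [dotProduct, mulVec, Finset.mul_sum, Finset.sum_mul]
  rw [Finset.sum_comm]
  refine Finset.sum_congr rfl fun i _ => Finset.sum_congr rfl fun j _ => ?_
  rw [hs i j]; ring

private lemma vmv_mulVec (w x : Fin d → ℝ) : (vecMulVec w w).mulVec x = (w ⬝ᵥ x) • w := by
  ext j
  simp [vecMulVec_apply, mulVec, dotProduct, Finset.mul_sum, smul_eq_mul, mul_comm, mul_left_comm]

private lemma psd_dot_nonneg {A : Matrix (Fin d) (Fin d) ℝ} (hA : A.PosSemidef) (x : Fin d → ℝ) :
    0 ≤ x ⬝ᵥ A.mulVec x := by simpa using hA.dotProduct_mulVec_nonneg x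

private lemma update_dot {A : Matrix (Fin d) (Fin d) ℝ} (u x : Fin d → ℝ) :
    x ⬝ᵥ (A - (u ⬝ᵥ A.mulVec u)⁻¹ • vecMulVec (A.mulVec u) (A.mulVec u)).mulVec x
      = x ⬝ᵥ A.mulVec x - (u ⬝ᵥ A.mulVec u)⁻¹ * ((A.mulVec u ⬝ᵥ x) * (A.mulVec u ⬝ᵥ x)) := by
  set w := A.mulVec u
  set c := u ⬝ᵥ w
  rw [sub_mulVec, smul_mulVec, vmv_mulVec, dotProduct_sub, dotProduct_smul,
    dotProduct_smul, smul_eq_mul, smul_eq_mul]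
  rw [dotProduct_comm x w]

private lemma update_psd {A : Matrix (Fin d) (Fin d) ℝ} (hA : A.PosSemidef)
    (u : Fin d → ℝ) (hc : 0 < u ⬝ᵥ A.mulVec u) :
    (A - (u ⬝ᵥ A.mulVec u)⁻¹ • vecMulVec (A.mulVec u) (A.mulVec u)).PosSemidef := by
  set w := A.mulVec u with hw
  set c := u ⬝ᵥ w with hcdef
  rw [posSemidef_iff_dotProduct_mulVec]
  constructor
  · refine hA.1.sub ?_
    ext i j
    simp [conjTranspose_apply, vecMulVec_apply, mul_comm]
  · intro x
    have hx : star x = x := by simp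
    rw [hx, update_dot]
    set b := w ⬝ᵥ x with hb
    have hy : 0 ≤ (x - (b / c) • u) ⬝ᵥ A.mulVec (x - (b / c) • u) := psd_dot_nonneg hA _
    have hexp : (x - (b / c) • u) ⬝ᵥ A.mulVec (x - (b / c) • u)
        = x ⬝ᵥ A.mulVec x - (b / c) * b - (b / c) * b + (b / c) * ((b / c) * c) := by
      rw [mulVec_sub, mulVec_smul, sub_dotProduct, dotProduct_sub, dotProduct_sub,
        smul_dotProduct, dotProduct_smul, smul_dotProduct, dotProduct_smul]
      rw [symm_dot hA.1 u x, ← hw, ← hb, dotProduct_comm x w, ← hb, ← hcdef]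
      simp only [smul_eq_mul]
      ring
    rw [hexp] at hy
    have hcne : c ≠ 0 := ne_of_gt hc
    have h1 : (b / c) * b = c⁻¹ * (b * b) := by field_simp
    have h2 : (b / c) * ((b / c) * c) = c⁻¹ * (b * b) := by field_simp
    rw [h1, h2] at hy
    simpa using hy

private lemma update_ker_lt {A : Matrix (Fin d) (Fin d) ℝ} (hA : A.PosSemidef)
    (u : Fin d → ℝ) (hc : u ⬝ᵥ A.mulVec u ≠ 0) :
    LinearMap.ker A.mulVecLin <
      LinearMap.ker (A - (u ⬝ᵥ A.mulVec u)⁻¹ • vecMulVec (A.mulVec u) (A.mulVec u)).mulVecLin := by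
  set w := A.mulVec u with hw
  set c := u ⬝ᵥ w with hcdef
  have hmv : ∀ x, (A - c⁻¹ • vecMulVec w w).mulVec x = A.mulVec x - (c⁻¹ * (w ⬝ᵥ x)) • w := by
    intro x
    rw [sub_mulVec, smul_mulVec, vmv_mulVec, smul_smul]
  constructor
  · intro x hx
    have hx0 : A.mulVec x = 0 := by simpa [Matrix.mulVecLin_apply] using hx
    have hwx : w ⬝ᵥ x = 0 := by
      rw [hw, ← symm_dot hA.1 u x, hx0, dotProduct_zero]
    rw [LinearMap.mem_ker, Matrix.mulVecLin_apply, hmv]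
    simp [hx0, hwx]
  · intro hle
    have hu : u ∈ LinearMap.ker (A - c⁻¹ • vecMulVec w w).mulVecLin := by
      have hwu : w ⬝ᵥ u = c := by rw [hcdef, dotProduct_comm]
      rw [LinearMap.mem_ker, Matrix.mulVecLin_apply, hmv, hwu, inv_mul_cancel₀ hc, one_smul, hw,
        sub_self]
    have hmem := hle hu
    have : A.mulVec u = 0 := by simpa [Matrix.mulVecLin_apply] using hmem
    rw [← hw] at this
    apply hc
    rw [hcdef, this, dotProduct_zero]

private lemma psd_diag_pos {A : Matrix (Fin d) (Fin d) ℝ} (hA : A.PosSemidef) (hne : A ≠ 0) :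
    ∃ j, 0 < A j j := by
  have : ∃ j l, A l j ≠ 0 := by
    by_contra h
    push_neg at h
    exact hne (by ext l j; exact h j l)
  obtain ⟨j, l, hjl⟩ := this
  refine ⟨j, ?_⟩
  have hcol : A.mulVec (Pi.single j 1) ≠ 0 := by
    intro h0
    apply hjl
    have := congrFun h0 l
    simpa [mulVec_single] using this
  have hne0 : (Pi.single j 1 : Fin d → ℝ) ⬝ᵥ A.mulVec (Pi.single j 1) ≠ 0 := by
    intro h0
    apply hcol
    refine (hA.dotProduct_mulVec_zero_iff (Pi.single j 1)).mp ?_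
    simpa using h0
  have hval : (Pi.single j 1 : Fin d → ℝ) ⬝ᵥ A.mulVec (Pi.single j 1) = A j j := by
    rw [mulVec_single]
    simp [single_dotProduct]
  rw [hval] at hne0
  have hge : 0 ≤ A j j := by
    have := psd_dot_nonneg hA (Pi.single j 1)
    rwa [hval] at this
  exact lt_of_le_of_ne hge (Ne.symm hne0)

end Aux

/-- The SR1 (symmetric rank-one) update. -/
noncomputable def SR1 {d : ℕ} (Q H : Matrix (Fin d) (Fin d) ℝ) (u : Fin d → ℝ) :
    Matrix (Fin d) (Fin d) ℝ :=
  Q - (u ⬝ᵥ (Q - H).mulVec u)⁻¹ • vecMulVec ((Q - H).mulVec u) ((Q - H).mulVec u)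

/-- the greedy SR1 iteration (picking the standard basis vector with
the largest diagonal entry of Q_k − H) recovers H in at most d steps. -/
theorem greedy_sr1_finite_termination {d : ℕ} (H : Matrix (Fin d) (Fin d) ℝ)
    (hH : H.IsSymm) (Q : ℕ → Matrix (Fin d) (Fin d) ℝ)
    (hQ0sym : (Q 0).IsSymm) (hQ0 : (Q 0 - H).PosSemidef)
    (hstep : ∀ k : ℕ,
      (Q k = H ∧ Q (k + 1) = Q k) ∨
      (Q k ≠ H ∧ ∃ i : Fin d,
        (∀ j : Fin d, (Q k - H) j j ≤ (Q k - H) i i) ∧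
        Q (k + 1) = SR1 (Q k) H (Pi.single i 1))) :
    ∃ k : ℕ, k ≤ d ∧ Q k = H := by
  have inv : ∀ k : ℕ, (∃ m ≤ k, Q m = H) ∨
      ((Q k - H).PosSemidef ∧
        k ≤ Module.finrank ℝ (LinearMap.ker (Q k - H).mulVecLin)) := by
    intro k
    induction k with
    | zero => exact Or.inr ⟨hQ0, Nat.zero_le _⟩
    | succ k ih =>
      rcases ih with ⟨m, hm, hQm⟩ | ⟨hpsd, hrk⟩
      · exact Or.inl ⟨m, hm.trans (Nat.le_succ k), hQm⟩
      rcases hstep k with ⟨hk, _⟩ | ⟨hne, i, hmax, hupd⟩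
      · exact Or.inl ⟨k, Nat.le_succ k, hk⟩
      · set A := Q k - H with hAdef
        set u : Fin d → ℝ := Pi.single i 1 with hu
        have hAne : A ≠ 0 := sub_ne_zero.mpr hne
        obtain ⟨j, hj⟩ := psd_diag_pos hpsd hAne
        have hcval : u ⬝ᵥ A.mulVec u = A i i := by
          rw [hu, mulVec_single]
          simp [single_dotProduct]
        have hcpos : 0 < u ⬝ᵥ A.mulVec u := by
          rw [hcval]; exact lt_of_lt_of_le hj (hmax j)
        have hnext : Q (k + 1) - H
            = A - (u ⬝ᵥ A.mulVec u)⁻¹ • vecMulVec (A.mulVec u) (A.mulVec u) := by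
          rw [hupd, SR1, ← hAdef, sub_right_comm]
        refine Or.inr ⟨?_, ?_⟩
        · rw [hnext]; exact update_psd hpsd u hcpos
        · rw [hnext]
          have hlt := update_ker_lt hpsd u (ne_of_gt hcpos)
          have := Submodule.finrank_lt_finrank_of_lt hlt
          omega
  rcases inv d with ⟨m, hm, hQm⟩ | ⟨hpsd, hrk⟩
  · exact ⟨m, hm, hQm⟩
  · refine ⟨d, le_refl d, ?_⟩
    have hle : Module.finrank ℝ (LinearMap.ker (Q d - H).mulVecLin) ≤ d := by
      have := Submodule.finrank_le (LinearMap.ker (Q d - H).mulVecLin)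
      simpa using this
    have heq : Module.finrank ℝ (LinearMap.ker (Q d - H).mulVecLin)
        = Module.finrank ℝ (Fin d → ℝ) := by
      simp only [Module.finrank_fin_fun]
      omega
    have htop : LinearMap.ker (Q d - H).mulVecLin = ⊤ := Submodule.eq_top_of_finrank_eq heq
    have hzero : Q d - H = 0 := by
      ext a b
      have hb : (Pi.single b 1 : Fin d → ℝ) ∈ LinearMap.ker (Q d - H).mulVecLin := by
        rw [htop]; trivial
      have : (Q d - H).mulVec (Pi.single b 1) = 0 := by
        simpa only [LinearMap.mem_ker, Matrix.mulVecLin_apply] using hb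
      have := congrFun this a
      simpa [mulVec_single] using this
    have := sub_eq_zero.mp hzero
    simpa using this
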